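/- arXiv:0707.0300 — 3 statements merged into one kernel-verified Lean document; each statement's English description precedes it below -/
import Mathlib

section
/- Let K be a finite simplicial complex on a finite vertex set V and let R be a commutative ring. For each face σ of K let S_R(σ) = R[x_v : v ∈ σ] be the polynomial R-algebra on σ, and for faces σ ⊆ τ let p_{τσ} : S_R(τ) → S_R(σ) be the R-algebra homomorphism with p_{τσ}(x_v) = x_v for v ∈ σ and p_{τσ}(x_v) = 0 for v ∈ τ ∖ σ. Let q_σ : R[K] → S_R(σ) be the R-algebra homomorphism induced by x_v ↦ x_v for v ∈ σ and x_v ↦ 0 for v ∉ σ. Then the cone with vertex R[K] and legs q_σ is a limit cone for the functor from the opposite of the face poset of K to the category of commutative R-algebras that sends σ to S_R(σ) and an inclusion σ ⊆ τ to p_{τσ}; in particular the Stanley–Reisner ring R[K] is isomorphic to the limit of this diagram. -/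
open MvPolynomial

/-- The Stanley–Reisner ideal of a collection `K` of subsets of `V`:
the ideal generated by the square-free monomials `∏_{v ∈ ζ} X v` over all
non-faces `ζ ∉ K`. -/
noncomputable def stanleyReisnerIdeal (R V : Type) [CommRing R] [DecidableEq V]
    (K : Set (Finset V)) : Ideal (MvPolynomial V R) :=
  Ideal.span { m | ∃ ζ : Finset V, ζ ∉ K ∧ m = ∏ v ∈ ζ, X v }

/-- The Stanley–Reisner ring `R[K]`. -/
abbrev stanleyReisnerRing (R V : Type) [CommRing R] [DecidableEq V]
    (K : Set (Finset V)) : Type :=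
  MvPolynomial V R ⧸ stanleyReisnerIdeal R V K

/-- For faces `σ ⊆ τ`, the projection `S_R(τ) → S_R(σ)` sending `x_v ↦ x_v`
for `v ∈ σ` and `x_v ↦ 0` for `v ∈ τ \ σ`. -/
noncomputable def faceProj (R V : Type) [CommRing R] [DecidableEq V]
    (σ τ : Finset V) :
    MvPolynomial { v // v ∈ τ } R →ₐ[R] MvPolynomial { v // v ∈ σ } R :=
  aeval (fun v : { v // v ∈ τ } =>
    if h : (v : V) ∈ σ then (X ⟨v, h⟩ : MvPolynomial { v // v ∈ σ } R) else 0)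

namespace SRAux

variable {R V : Type} [CommRing R] [DecidableEq V]

/-- The "kill variables outside σ" endomorphism of `R[V]`. -/
noncomputable def kk (R : Type) [CommRing R] {V : Type} [DecidableEq V]
    (σ : Finset V) : MvPolynomial V R →ₐ[R] MvPolynomial V R :=
  aeval (fun v => if v ∈ σ then X v else 0)

/-- Projection to the polynomial ring on σ. -/
noncomputable def pp (R : Type) [CommRing R] {V : Type} [DecidableEq V]
    (σ : Finset V) : MvPolynomial V R →ₐ[R] MvPolynomial { v // v ∈ σ } R :=
  aeval (fun v : V => if h : v ∈ σ then (X ⟨v, h⟩ : MvPolynomial { v // v ∈ σ } R) else 0)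

/-- Inclusion of the polynomial ring on σ. -/
noncomputable def ee (R : Type) [CommRing R] {V : Type} [DecidableEq V]
    (σ : Finset V) : MvPolynomial { v // v ∈ σ } R →ₐ[R] MvPolynomial V R :=
  rename Subtype.val

lemma pp_comp_ee (σ : Finset V) :
    (pp R σ).comp (ee R σ) = AlgHom.id R _ := by
  apply algHom_ext
  rintro ⟨v, hv⟩
  simp [pp, ee, hv]

lemma kk_comp_ee {σ τ : Finset V} (h : σ ⊆ τ) :
    (kk R σ).comp (ee R τ) = (ee R σ).comp (faceProj R V σ τ) := by
  apply algHom_ext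
  rintro ⟨v, hv⟩
  by_cases h' : v ∈ σ <;> simp [kk, ee, faceProj, h']

lemma kk_comp_ee_self (σ : Finset V) :
    (kk R σ).comp (ee R σ) = ee R σ := by
  apply algHom_ext
  rintro ⟨v, hv⟩
  simp [kk, ee, hv]

lemma ee_comp_pp (σ : Finset V) :
    (ee R σ).comp (pp R σ) = kk R σ := by
  apply algHom_ext
  intro v
  by_cases h : v ∈ σ <;> simp [kk, pp, ee, h]

lemma pp_comp_kk (σ : Finset V) :
    (pp R σ).comp (kk R σ) = pp R σ := by
  apply algHom_ext
  intro v
  by_cases h : v ∈ σ <;> simp [kk, pp, h]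

lemma faceProj_comp_pp {σ τ : Finset V} (h : σ ⊆ τ) :
    (faceProj R V σ τ).comp (pp R τ) = pp R σ := by
  apply algHom_ext
  intro v
  by_cases h' : v ∈ σ
  · have : v ∈ τ := h h'
    simp [pp, faceProj, h', this]
  · by_cases h'' : v ∈ τ <;> simp [pp, faceProj, h', h'']

lemma kk_monomial (σ : Finset V) (a : V →₀ ℕ) (c : R) :
    kk R σ (monomial a c) =
      if a.support ⊆ σ then monomial a c else 0 := by
  rw [kk, aeval_monomial]
  split_ifs with h
  · rw [monomial_eq]
    congr 1
    apply Finsupp.prod_congr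
    intro v hv
    rw [if_pos (h hv)]
  · rw [Finset.not_subset] at h
    obtain ⟨v, hv, hvσ⟩ := h
    rw [Finsupp.prod, Finset.prod_eq_zero hv, mul_zero]
    rw [if_neg hvσ]
    exact zero_pow (by simpa using hv)

lemma coeff_kk (σ : Finset V) (p : MvPolynomial V R) (b : V →₀ ℕ) :
    coeff b (kk R σ p) = if b.support ⊆ σ then coeff b p else 0 := by
  conv_lhs => rw [p.as_sum, map_sum]
  rw [coeff_sum]
  have : ∀ a ∈ p.support,
      coeff b (kk R σ (monomial a (coeff a p))) =
        if a = b then (if b.support ⊆ σ then coeff b p else 0) else 0 := by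
    intro a _
    rw [kk_monomial]
    split_ifs with h1 h2 h3 h2 h3 <;>
      simp_all [coeff_monomial]
  rw [Finset.sum_congr rfl this, Finset.sum_ite_eq' p.support b]
  split_ifs with hb h <;> simp_all [notMem_support_iff]

lemma monomial_mem (K : Set (Finset V)) (a : V →₀ ℕ) (c : R)
    (ha : a.support ∉ K) :
    monomial a c ∈ stanleyReisnerIdeal R V K := by
  classical
  set u : V →₀ ℕ := ∑ v ∈ a.support, Finsupp.single v 1 with hu_def
  have hu : ∀ w, u w = if w ∈ a.support then 1 else 0 := by
    intro w
    rw [hu_def, Finset.sum_apply']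
    simp [Finsupp.single_apply]
  have hle : ∀ w, u w ≤ a w := by
    intro w
    rw [hu w]
    split_ifs with h
    · exact Nat.one_le_iff_ne_zero.mpr (Finsupp.mem_support_iff.mp h)
    · exact Nat.zero_le _
  have hprod : (monomial u (1 : R)) = ∏ v ∈ a.support, X v := by
    rw [monomial_sum_one]
    apply Finset.prod_congr rfl
    intro v _
    rw [X]
  have hsum : a - u + u = a := by
    apply Finsupp.ext
    intro w
    have := hle w
    rw [Finsupp.add_apply, Finsupp.tsub_apply]
    omega
  have key : monomial (a - u) c * monomial u 1 = monomial a c := by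
    rw [monomial_mul, mul_one, hsum]
  rw [← key, hprod]
  exact Ideal.mul_mem_left _ _ (Ideal.subset_span ⟨a.support, ha, rfl⟩)

lemma mem_ideal_of_coeff (K : Set (Finset V)) (p : MvPolynomial V R)
    (h : ∀ a : V →₀ ℕ, a.support ∈ K → coeff a p = 0) :
    p ∈ stanleyReisnerIdeal R V K := by
  rw [p.as_sum]
  apply Ideal.sum_mem
  intro a ha
  by_cases hK : a.support ∈ K
  · exact absurd (h a hK) (mem_support_iff.mp ha)
  · exact monomial_mem K a _ hK

lemma mem_ideal_of_kk (K : Set (Finset V)) (p : MvPolynomial V R)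
    (h : ∀ σ : Finset V, σ ∈ K → kk R σ p = 0) :
    p ∈ stanleyReisnerIdeal R V K := by
  apply mem_ideal_of_coeff
  intro a ha
  have := coeff_kk a.support p a
  rw [h a.support ha, if_pos (Finset.Subset.refl _)] at this
  simpa using this.symm

open Classical in
noncomputable def glue [Fintype V] (K : Set (Finset V))
    (F : Finset V → MvPolynomial V R) : MvPolynomial V R :=
  ∑ ζ ∈ Finset.univ.filter (fun ζ : Finset V => ζ ∈ K),
    ∑ a ∈ (F ζ).support.filter (fun a => a.support = ζ),
      monomial a (coeff a (F ζ))

open Classical in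
lemma coeff_glue [Fintype V] (K : Set (Finset V))
    (F : Finset V → MvPolynomial V R) (a : V →₀ ℕ) :
    coeff a (glue K F) = if a.support ∈ K then coeff a (F a.support) else 0 := by
  rw [glue, coeff_sum]
  have inner : ∀ ζ : Finset V,
      coeff a (∑ b ∈ (F ζ).support.filter (fun b => b.support = ζ),
        monomial b (coeff b (F ζ))) =
      if a.support = ζ then coeff a (F ζ) else 0 := by
    intro ζ
    rw [coeff_sum]
    split_ifs with h
    · rcases eq_or_ne (coeff a (F ζ)) 0 with h0 | h0
      · rw [h0]
        apply Finset.sum_eq_zero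
        intro b hb
        rw [coeff_monomial]
        rcases eq_or_ne b a with rfl | hba
        · simpa using h0
        · rw [if_neg hba]
      · rw [Finset.sum_eq_single a]
        · rw [coeff_monomial, if_pos rfl]
        · intro b _ hba
          rw [coeff_monomial, if_neg hba]
        · intro ha
          exact absurd (Finset.mem_filter.mpr ⟨mem_support_iff.mpr h0, h⟩) ha
    · apply Finset.sum_eq_zero
      intro b hb
      rw [coeff_monomial, if_neg]
      rintro rfl
      exact h (Finset.mem_filter.mp hb).2
  rw [Finset.sum_congr rfl fun ζ _ => inner ζ, Finset.sum_ite_eq]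
  simp

open Classical in
lemma kk_glue [Fintype V] (K : Set (Finset V))
    (F : Finset V → MvPolynomial V R) (σ : Finset V) (hσ : σ ∈ K)
    (hdown : ∀ ζ : Finset V, ζ ⊆ σ → ζ ∈ K)
    (hcompat : ∀ ζ : Finset V, ζ ⊆ σ → kk R ζ (F σ) = F ζ) :
    kk R σ (glue K F) = F σ := by
  apply MvPolynomial.ext
  intro a
  rw [coeff_kk, coeff_glue]
  by_cases h1 : a.support ⊆ σ
  · rw [if_pos h1, if_pos (hdown _ h1), ← hcompat _ h1, coeff_kk,
      if_pos (Finset.Subset.refl _)]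
  · rw [if_neg h1, ← hcompat σ (Finset.Subset.refl σ), coeff_kk, if_neg h1]

end SRAux

set_option maxHeartbeats 1600000

/-- Let `K` be a finite simplicial complex on a finite vertex
set `V` and `R` a commutative ring.  There is a family of `R`-algebra
homomorphisms `q σ : R[K] → S_R(σ)` (for faces `σ ∈ K`), induced by
`x_v ↦ x_v` for `v ∈ σ` and `x_v ↦ 0` for `v ∉ σ`, which is compatible with
the projections `p_{τσ}`; and the cone with vertex `R[K]` and legs `q σ` is a
limit cone for the diagram `σ ↦ S_R(σ)` over the opposite of the face poset of
`K`, in the category of commutative `R`-algebras: for every commutative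
`R`-algebra `B` and every compatible family `f σ : B → S_R(σ)` there is a
unique `R`-algebra map `g : B → R[K]` with `q σ ∘ g = f σ` for all `σ ∈ K`.
In particular `R[K]` is isomorphic to the limit of the diagram. -/

theorem stanleyReisner_isLimit_of_facePolynomialDiagram
    (R V : Type) [CommRing R] [Fintype V] [DecidableEq V]
    (K : Set (Finset V))
    (hempty : (∅ : Finset V) ∈ K)
    (hdown : ∀ σ τ : Finset V, σ ∈ K → τ ⊆ σ → τ ∈ K)
    (hsingle : ∀ v : V, ({v} : Finset V) ∈ K) :
    ∃ q : ∀ σ : Finset V, σ ∈ K →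
        (stanleyReisnerRing R V K →ₐ[R] MvPolynomial { v // v ∈ σ } R),
      -- the legs `q σ` are induced by `x_v ↦ x_v` (`v ∈ σ`), `x_v ↦ 0` (`v ∉ σ`):
      (∀ (σ : Finset V) (hσ : σ ∈ K),
        (q σ hσ).comp (Ideal.Quotient.mkₐ R (stanleyReisnerIdeal R V K)) =
          aeval (fun v : V =>
            if h : v ∈ σ then (X ⟨v, h⟩ : MvPolynomial { v // v ∈ σ } R) else 0)) ∧
      -- `(R[K], q)` is a cone over the diagram:
      (∀ (σ τ : Finset V) (hσ : σ ∈ K) (hτ : τ ∈ K), σ ⊆ τ →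
        (faceProj R V σ τ).comp (q τ hτ) = q σ hσ) ∧
      -- and it is a limit cone:
      (∀ (B : Type) [CommRing B] [Algebra R B]
        (f : ∀ σ : Finset V, σ ∈ K → (B →ₐ[R] MvPolynomial { v // v ∈ σ } R)),
        (∀ (σ τ : Finset V) (hσ : σ ∈ K) (hτ : τ ∈ K), σ ⊆ τ →
          (faceProj R V σ τ).comp (f τ hτ) = f σ hσ) →
        ∃! g : B →ₐ[R] stanleyReisnerRing R V K,
          ∀ (σ : Finset V) (hσ : σ ∈ K), (q σ hσ).comp g = f σ hσ) := by
  classical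
  set I := stanleyReisnerIdeal R V K with hI
  have hker : ∀ (σ : Finset V), σ ∈ K → ∀ p ∈ I, SRAux.pp R σ p = 0 := by
    intro σ hσ
    have hle : I ≤ RingHom.ker (SRAux.pp R σ) := by
      rw [hI, stanleyReisnerIdeal, Ideal.span_le]
      rintro m ⟨ζ, hζ, rfl⟩
      have hns : ¬ ζ ⊆ σ := fun hsub => hζ (hdown σ ζ hσ hsub)
      obtain ⟨v, hv, hvσ⟩ := Finset.not_subset.mp hns
      simp only [SetLike.mem_coe, RingHom.mem_ker, map_prod]
      apply Finset.prod_eq_zero hv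
      simp [SRAux.pp, hvσ]
    intro p hp
    exact hle hp
  set q : ∀ σ : Finset V, σ ∈ K →
      (stanleyReisnerRing R V K →ₐ[R] MvPolynomial { v // v ∈ σ } R) :=
    fun σ hσ => Ideal.Quotient.liftₐ I (SRAux.pp R σ) (hker σ hσ) with hqdef
  have hqmk : ∀ (σ : Finset V) (hσ : σ ∈ K) (p : MvPolynomial V R),
      q σ hσ (Ideal.Quotient.mk I p) = SRAux.pp R σ p := by
    intro σ hσ p
    exact AlgHom.congr_fun
      (Ideal.Quotient.liftₐ_comp I (SRAux.pp R σ) (hker σ hσ)) p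
  refine ⟨q, ?_, ?_, ?_⟩
  · intro σ hσ
    exact Ideal.Quotient.liftₐ_comp I (SRAux.pp R σ) (hker σ hσ)
  · intro σ τ hσ hτ hsub
    apply AlgHom.ext
    intro x
    obtain ⟨p, rfl⟩ := Ideal.Quotient.mk_surjective x
    rw [AlgHom.comp_apply, hqmk τ hτ p, hqmk σ hσ p]
    exact AlgHom.congr_fun (SRAux.faceProj_comp_pp hsub) p
  · intro B _ _ f hf
    set Fp : Finset V → B → MvPolynomial V R :=
      fun ζ b => if h : ζ ∈ K then SRAux.ee R ζ (f ζ h b) else 0 with hFpdef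
    set G : B → MvPolynomial V R :=
      fun b => SRAux.glue K (fun ζ => Fp ζ b) with hGdef
    have hFp : ∀ (σ : Finset V) (hσ : σ ∈ K) (b : B),
        Fp σ b = SRAux.ee R σ (f σ hσ b) := fun σ hσ b => dif_pos hσ
    have hkkF : ∀ (σ : Finset V), σ ∈ K → ∀ (ζ : Finset V), ζ ⊆ σ → ∀ b : B,
        SRAux.kk R ζ (Fp σ b) = Fp ζ b := by
      intro σ hσ ζ hsub b
      have hζ : ζ ∈ K := hdown σ ζ hσ hsub
      rw [hFp σ hσ, hFp ζ hζ]
      have h1 := AlgHom.congr_fun (SRAux.kk_comp_ee (R := R) hsub) (f σ hσ b)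
      rw [AlgHom.comp_apply, AlgHom.comp_apply] at h1
      rw [h1]
      congr 1
      have h2 := AlgHom.congr_fun (hf ζ σ hζ hσ hsub) b
      rw [AlgHom.comp_apply] at h2
      exact h2
    have hkkG : ∀ (σ : Finset V) (hσ : σ ∈ K) (b : B),
        SRAux.kk R σ (G b) = Fp σ b := by
      intro σ hσ b
      exact SRAux.kk_glue K _ σ hσ (fun ζ h => hdown σ ζ hσ h)
        (fun ζ h => hkkF σ hσ ζ h b)
    have hppG : ∀ (σ : Finset V) (hσ : σ ∈ K) (b : B),
        SRAux.pp R σ (G b) = f σ hσ b := by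
      intro σ hσ b
      have h1 := AlgHom.congr_fun (SRAux.pp_comp_kk (R := R) σ) (G b)
      rw [AlgHom.comp_apply] at h1
      rw [← h1, hkkG σ hσ b, hFp σ hσ b]
      have h2 := AlgHom.congr_fun (SRAux.pp_comp_ee (R := R) σ) (f σ hσ b)
      rw [AlgHom.comp_apply] at h2
      simpa using h2
    have hmkdiff : ∀ p p' : MvPolynomial V R,
        (∀ (σ : Finset V), σ ∈ K → SRAux.kk R σ p = SRAux.kk R σ p') →
        Ideal.Quotient.mk I p = Ideal.Quotient.mk I p' := by
      intro p p' h
      rw [Ideal.Quotient.eq]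
      exact SRAux.mem_ideal_of_kk K _
        (fun σ hσ => by rw [map_sub, h σ hσ, sub_self])
    refine ⟨{ toFun := fun b => Ideal.Quotient.mk I (G b)
            , map_one' := ?_, map_mul' := ?_, map_zero' := ?_
            , map_add' := ?_, commutes' := ?_ }, ?_, ?_⟩
    · rw [← map_one (Ideal.Quotient.mk I)]
      apply hmkdiff
      intro σ hσ
      simp [hkkG σ hσ, hFp σ hσ]
    · intro x y
      rw [← map_mul (Ideal.Quotient.mk I)]
      apply hmkdiff
      intro σ hσ
      simp [hkkG σ hσ, hFp σ hσ, map_mul]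
    · rw [← map_zero (Ideal.Quotient.mk I)]
      apply hmkdiff
      intro σ hσ
      simp [hkkG σ hσ, hFp σ hσ]
    · intro x y
      rw [← map_add (Ideal.Quotient.mk I)]
      apply hmkdiff
      intro σ hσ
      simp [hkkG σ hσ, hFp σ hσ, map_add]
    · intro r
      rw [← (Ideal.Quotient.mkₐ R I).commutes r, Ideal.Quotient.mkₐ_eq_mk]
      apply hmkdiff
      intro σ hσ
      simp [hkkG σ hσ, hFp σ hσ, AlgHom.commutes]
    · intro σ hσ
      apply AlgHom.ext
      intro b
      rw [AlgHom.comp_apply]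
      show q σ hσ (Ideal.Quotient.mk I (G b)) = f σ hσ b
      rw [hqmk σ hσ (G b), hppG σ hσ b]
    · intro g' hg'
      apply AlgHom.ext
      intro b
      obtain ⟨p, hp⟩ := Ideal.Quotient.mk_surjective (g' b)
      show g' b = Ideal.Quotient.mk I (G b)
      rw [← hp]
      apply hmkdiff
      intro σ hσ
      have h1 : SRAux.pp R σ p = f σ hσ b := by
        have h2 := AlgHom.congr_fun (hg' σ hσ) b
        rw [AlgHom.comp_apply] at h2
        rw [← hqmk σ hσ p, hp, h2]
      have h3 := AlgHom.congr_fun (SRAux.ee_comp_pp (R := R) σ) p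
      rw [AlgHom.comp_apply] at h3
      rw [hkkG σ hσ b, hFp σ hσ b, ← h1, h3]
end

section
/- Let K be a finite simplicial complex on a finite vertex set V and let R be a commutative ring. For each face σ of K let Λ(σ) denote the exterior algebra over R of the free R-module with basis σ, and for faces σ ⊆ τ let Λ(σ) → Λ(τ) be the R-algebra homomorphism induced by the inclusion of basis elements. Then the colimit, in the category of (not necessarily commutative) associative unital R-algebras, of the functor from the face poset of K sending σ to Λ(σ) is isomorphic to the quotient of the free associative R-algebra on generators u_v (v ∈ V) by the two-sided ideal generated by the elements u_v² for all v ∈ V and u_v u_w + u_w u_v for all two-element faces {v,w} ∈ K, where the structure map from each Λ(σ) into this quotient is the algebra map sending each exterior generator corresponding to v ∈ σ to the class of u_v. -/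
open FreeAlgebra

/-- The quadratic relations defining the quadratic dual of the Stanley–Reisner
ring: `u_v² = 0` for all vertices `v`, and `u_v u_w + u_w u_v = 0` for all
two-element faces `{v,w} ∈ K`. -/
inductive extQuadRel (R V : Type) [CommRing R] [DecidableEq V]
    (K : Set (Finset V)) : FreeAlgebra R V → FreeAlgebra R V → Prop
  | sq (v : V) : extQuadRel R V K (ι R v * ι R v) 0
  | anticomm (v w : V) (hvw : v ≠ w) (h : ({v, w} : Finset V) ∈ K) :
      extQuadRel R V K (ι R v * ι R w + ι R w * ι R v) 0

/-- The quotient of the free associative `R`-algebra on generators `u_v`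
(`v ∈ V`) by the two-sided ideal generated by the elements `u_v²` (`v ∈ V`)
and `u_v u_w + u_w u_v` (`{v,w} ∈ K` a two-element face). -/
abbrev extQuadDual (R V : Type) [CommRing R] [DecidableEq V]
    (K : Set (Finset V)) : Type :=
  RingQuot (extQuadRel R V K)


section Aux

variable (R V : Type) [CommRing R] [Fintype V] [DecidableEq V] (K : Set (Finset V))

/-- Extension-by-zero linear map between function spaces on faces. -/
def extLin (σ τ : Finset V) (hστ : σ ⊆ τ) :
    ({ v // v ∈ σ } → R) →ₗ[R] ({ v // v ∈ τ } → R) where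
  toFun x w := if h : (w : V) ∈ σ then x ⟨w, h⟩ else 0
  map_add' x y := by funext w; by_cases h : (w : V) ∈ σ <;> simp [h]
  map_smul' c x := by funext w; by_cases h : (w : V) ∈ σ <;> simp [h]

lemma extLin_single (σ τ : Finset V) (hστ : σ ⊆ τ) (v : { v // v ∈ σ }) :
    extLin R V σ τ hστ (Pi.single v 1) = Pi.single (⟨(v : V), hστ v.2⟩ : { v // v ∈ τ }) 1 := by
  funext w
  simp only [extLin, LinearMap.coe_mk, AddHom.coe_mk]
  by_cases h : (w : V) ∈ σ
  · rw [dif_pos h]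
    by_cases hv : (w : V) = (v : V)
    · have h1 : (⟨(w : V), h⟩ : { v // v ∈ σ }) = v := Subtype.ext hv
      have h2 : w = (⟨(v : V), hστ v.2⟩ : { v // v ∈ τ }) := Subtype.ext hv
      rw [h1, h2, Pi.single_eq_same, Pi.single_eq_same]
    · have h1 : (⟨(w : V), h⟩ : { v // v ∈ σ }) ≠ v := fun he => hv (congrArg Subtype.val he)
      have h2 : w ≠ (⟨(v : V), hστ v.2⟩ : { v // v ∈ τ }) := fun he => hv (congrArg Subtype.val he)
      rw [Pi.single_eq_of_ne h1, Pi.single_eq_of_ne h2]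
  · rw [dif_neg h]
    have h2 : w ≠ (⟨(v : V), hστ v.2⟩ : { v // v ∈ τ }) := by
      intro he
      exact h (he ▸ v.2)
    rw [Pi.single_eq_of_ne h2]

/-- The class of the generator `u_v` in the quadratic dual. -/
noncomputable def uGen (v : V) : extQuadDual R V K :=
  RingQuot.mkAlgHom R (extQuadRel R V K) (ι R v)

lemma uGen_sq (v : V) : uGen R V K v * uGen R V K v = 0 := by
  have := RingQuot.mkAlgHom_rel R (extQuadRel.sq (R := R) (V := V) (K := K) v)
  simpa [uGen, map_mul] using this

lemma uGen_anticomm (v w : V) (hvw : v ≠ w) (h : ({v, w} : Finset V) ∈ K) :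
    uGen R V K v * uGen R V K w + uGen R V K w * uGen R V K v = 0 := by
  have := RingQuot.mkAlgHom_rel R (extQuadRel.anticomm (R := R) v w hvw h)
  simpa [uGen, map_mul, map_add] using this

/-- The linear map underlying `j σ`. -/
noncomputable def jLin (σ : Finset V) :
    ({ v // v ∈ σ } → R) →ₗ[R] extQuadDual R V K where
  toFun x := ∑ v : { v // v ∈ σ }, x v • uGen R V K (v : V)
  map_add' x y := by simp [add_smul, Finset.sum_add_distrib]
  map_smul' c x := by simp [mul_smul, Finset.smul_sum]

lemma jLin_single (σ : Finset V) (v : { v // v ∈ σ }) :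
    jLin R V K σ (Pi.single v 1) = uGen R V K (v : V) := by
  show (∑ w : { v // v ∈ σ }, (Pi.single v (1 : R) : { v // v ∈ σ } → R) w • uGen R V K (w : V)) = uGen R V K (v : V)
  rw [Fintype.sum_eq_single v]
  · simp
  · intro w hw
    rw [Pi.single_eq_of_ne hw, zero_smul]

lemma jLin_sq (σ : Finset V) (hσ : σ ∈ K)
    (hdown : ∀ σ τ : Finset V, σ ∈ K → τ ⊆ σ → τ ∈ K)
    (x : { v // v ∈ σ } → R) :
    jLin R V K σ x * jLin R V K σ x = 0 := by
  show (∑ v : { v // v ∈ σ }, x v • uGen R V K (v : V)) * (∑ v : { v // v ∈ σ }, x v • uGen R V K (v : V)) = 0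
  rw [Finset.sum_mul_sum]
  rw [← Finset.sum_product']
  refine Finset.sum_ninvolution Prod.swap ?_ ?_ (fun _ => Finset.mem_univ _) (fun a => rfl)
  · rintro ⟨v, w⟩
    simp only [Prod.swap_prod_mk]
    rw [smul_mul_smul_comm, smul_mul_smul_comm, mul_comm (x w) (x v), ← smul_add]
    by_cases hvw : v = w
    · subst hvw
      rw [uGen_sq]
      simp
    · have hvw' : (v : V) ≠ (w : V) := fun he => hvw (Subtype.ext he)
      have hmem : ({(v : V), (w : V)} : Finset V) ∈ K := by
        refine hdown σ _ hσ ?_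
        intro a ha
        rcases Finset.mem_insert.mp ha with h | h
        · exact h ▸ v.2
        · exact (Finset.mem_singleton.mp h) ▸ w.2
      rw [uGen_anticomm R V K _ _ hvw' hmem, smul_zero]
  · rintro ⟨v, w⟩ hne
    simp only [Prod.swap_prod_mk, ne_eq, Prod.mk.injEq, not_and]
    intro he1
    exfalso
    apply hne
    subst he1
    rw [smul_mul_smul_comm, uGen_sq, smul_zero]

end Aux

/-- Let `K` be a finite simplicial complex on a finite vertex
set `V` and `R` a commutative ring.  For a face `σ` let `Λ(σ)` be the exterior
algebra on the free `R`-module with basis `σ`.  There are `R`-algebra maps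
`inc : Λ(σ) → Λ(τ)` (for faces `σ ⊆ τ`) induced by the inclusion of basis
elements, and `j σ : Λ(σ) → A(K)` into the quotient `A(K)` of the free
associative algebra by the relations `u_v² = 0` (`v ∈ V`) and
`u_v u_w + u_w u_v = 0` (`{v,w} ∈ K`), sending each exterior generator of
`v ∈ σ` to the class of `u_v`; the maps `j σ` form a cocone over the diagram
`σ ↦ Λ(σ)` on the face poset of `K`, and this cocone is a colimit cocone in
the category of associative unital `R`-algebras.  In particular the colimit of
the diagram is isomorphic to `A(K)`. -/
theorem exteriorDiagram_colimit_isQuadraticDual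
    (R V : Type) [CommRing R] [Fintype V] [DecidableEq V]
    (K : Set (Finset V))
    (hempty : (∅ : Finset V) ∈ K)
    (hdown : ∀ σ τ : Finset V, σ ∈ K → τ ⊆ σ → τ ∈ K)
    (hsingle : ∀ v : V, ({v} : Finset V) ∈ K) :
    ∃ (inc : ∀ σ τ : Finset V, σ ∈ K → τ ∈ K → σ ⊆ τ →
        (ExteriorAlgebra R ({ v // v ∈ σ } → R) →ₐ[R]
          ExteriorAlgebra R ({ v // v ∈ τ } → R)))
      (j : ∀ σ : Finset V, σ ∈ K →
        (ExteriorAlgebra R ({ v // v ∈ σ } → R) →ₐ[R] extQuadDual R V K)),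
      -- `inc` is induced by the inclusion of basis elements:
      (∀ (σ τ : Finset V) (hσ : σ ∈ K) (hτ : τ ∈ K) (hστ : σ ⊆ τ)
        (v : { v // v ∈ σ }),
        inc σ τ hσ hτ hστ (ExteriorAlgebra.ι R (Pi.single v (1 : R))) =
          ExteriorAlgebra.ι R (Pi.single (⟨(v : V), hστ v.2⟩ : { v // v ∈ τ }) (1 : R))) ∧
      -- `j σ` sends the exterior generator of `v ∈ σ` to the class of `u_v`:
      (∀ (σ : Finset V) (hσ : σ ∈ K) (v : { v // v ∈ σ }),
        j σ hσ (ExteriorAlgebra.ι R (Pi.single v (1 : R))) =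
          RingQuot.mkAlgHom R (extQuadRel R V K) (ι R (v : V))) ∧
      -- the maps `j σ` form a cocone:
      (∀ (σ τ : Finset V) (hσ : σ ∈ K) (hτ : τ ∈ K) (hστ : σ ⊆ τ),
        (j τ hτ).comp (inc σ τ hσ hτ hστ) = j σ hσ) ∧
      -- which is a colimit cocone in the category of associative unital
      -- `R`-algebras:
      (∀ (B : Type) [Ring B] [Algebra R B]
        (f : ∀ σ : Finset V, σ ∈ K →
          (ExteriorAlgebra R ({ v // v ∈ σ } → R) →ₐ[R] B)),
        (∀ (σ τ : Finset V) (hσ : σ ∈ K) (hτ : τ ∈ K) (hστ : σ ⊆ τ),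
          (f τ hτ).comp (inc σ τ hσ hτ hστ) = f σ hσ) →
        ∃! g : extQuadDual R V K →ₐ[R] B,
          ∀ (σ : Finset V) (hσ : σ ∈ K), g.comp (j σ hσ) = f σ hσ) := by
  classical
  refine ⟨fun σ τ hσ hτ hστ => ExteriorAlgebra.lift R
      ⟨(ExteriorAlgebra.ι R).comp (extLin R V σ τ hστ),
        fun m => ExteriorAlgebra.ι_sq_zero _⟩,
    fun σ hσ => ExteriorAlgebra.lift R ⟨jLin R V K σ, jLin_sq R V K σ hσ hdown⟩,
    ?_, ?_, ?_, ?_⟩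
  · intro σ τ hσ hτ hστ v
    rw [ExteriorAlgebra.lift_ι_apply]
    simp [extLin_single]
  · intro σ hσ v
    rw [ExteriorAlgebra.lift_ι_apply, jLin_single]
    rfl
  · intro σ τ hσ hτ hστ
    apply ExteriorAlgebra.hom_ext
    apply (Pi.basisFun R { v // v ∈ σ }).ext
    intro v
    simp only [Pi.basisFun_apply, LinearMap.coe_comp, Function.comp_apply,
      AlgHom.toLinearMap_apply, AlgHom.coe_comp]
    rw [ExteriorAlgebra.lift_ι_apply]
    simp only [LinearMap.coe_comp, Function.comp_apply]
    rw [extLin_single, ExteriorAlgebra.lift_ι_apply, ExteriorAlgebra.lift_ι_apply,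
      jLin_single, jLin_single]
  · intro B _ _ f hf
    set b : V → B := fun v =>
      f {v} (hsingle v) (ExteriorAlgebra.ι R
        (Pi.single (⟨v, Finset.mem_singleton_self v⟩ : { w // w ∈ ({v} : Finset V) }) 1))
      with hb
    have hbσ : ∀ (σ : Finset V) (hσ : σ ∈ K) (v : { v // v ∈ σ }),
        f σ hσ (ExteriorAlgebra.ι R (Pi.single v 1)) = b (v : V) := by
      intro σ hσ v
      have hsub : ({(v : V)} : Finset V) ⊆ σ := Finset.singleton_subset_iff.mpr v.2
      have := congrArg (fun g => g (ExteriorAlgebra.ι R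
        (Pi.single (⟨(v : V), Finset.mem_singleton_self _⟩ :
          { w // w ∈ ({(v : V)} : Finset V) }) 1)))
        (hf {(v : V)} σ (hsingle _) hσ hsub)
      simp only [AlgHom.coe_comp, Function.comp_apply] at this
      rw [ExteriorAlgebra.lift_ι_apply] at this
      simp only [LinearMap.coe_comp, Function.comp_apply] at this
      rw [extLin_single] at this
      have hv : (⟨((⟨(v : V), Finset.mem_singleton_self _⟩ :
          { w // w ∈ ({(v : V)} : Finset V) }) : V), hsub (Finset.mem_singleton_self _)⟩ :
          { v // v ∈ σ }) = v := Subtype.ext rfl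
      rw [hv] at this
      exact this
    set φ : FreeAlgebra R V →ₐ[R] B := FreeAlgebra.lift R b with hφ
    have hφι : ∀ v : V, φ (ι R v) = b v := fun v => by simp [hφ]
    have hw : ∀ ⦃x y⦄, extQuadRel R V K x y → φ x = φ y := by
      intro x y hxy
      induction hxy with
      | sq v =>
        rw [map_mul, hφι, map_zero, hb]
        rw [← map_mul, ExteriorAlgebra.ι_sq_zero, map_zero]
      | anticomm v w hvw h =>
        rw [map_add, map_mul, map_mul, hφι, hφι, map_zero]
        have hv : ({v} : Finset V) ⊆ {v, w} := by
          intro a ha; exact Finset.mem_insert.mpr (Or.inl (Finset.mem_singleton.mp ha))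
        have hw' : ({w} : Finset V) ⊆ {v, w} := by
          intro a ha
          exact Finset.mem_insert.mpr (Or.inr (Finset.mem_singleton.mp ha ▸
            Finset.mem_singleton_self w))
        have hvm : v ∈ ({v, w} : Finset V) := Finset.mem_insert_self v _
        have hwm : w ∈ ({v, w} : Finset V) :=
          Finset.mem_insert.mpr (Or.inr (Finset.mem_singleton_self w))
        have e1 : b v = f {v, w} h (ExteriorAlgebra.ι R
            (Pi.single (⟨v, hvm⟩ : { x // x ∈ ({v, w} : Finset V) }) 1)) :=
          (hbσ {v, w} h ⟨v, hvm⟩).symm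
        have e2 : b w = f {v, w} h (ExteriorAlgebra.ι R
            (Pi.single (⟨w, hwm⟩ : { x // x ∈ ({v, w} : Finset V) }) 1)) :=
          (hbσ {v, w} h ⟨w, hwm⟩).symm
        have key := congrArg (f {v, w} h)
          (ExteriorAlgebra.ι_add_mul_swap (R := R)
            (Pi.single (⟨v, hvm⟩ : { x // x ∈ ({v, w} : Finset V) }) 1)
            (Pi.single (⟨w, hwm⟩ : { x // x ∈ ({v, w} : Finset V) }) 1))
        simp only [map_add, map_mul, map_zero] at key
        rw [e1, e2]
        exact key
    refine ⟨RingQuot.liftAlgHom R ⟨φ, hw⟩, ?_, ?_⟩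
    · intro σ hσ
      apply ExteriorAlgebra.hom_ext
      apply (Pi.basisFun R { v // v ∈ σ }).ext
      intro v
      simp only [Pi.basisFun_apply, LinearMap.coe_comp, Function.comp_apply,
        AlgHom.toLinearMap_apply, AlgHom.coe_comp]
      rw [ExteriorAlgebra.lift_ι_apply, jLin_single, hbσ σ hσ v]
      show RingQuot.liftAlgHom R ⟨φ, hw⟩ (RingQuot.mkAlgHom R _ (ι R (v : V))) = _
      rw [RingQuot.liftAlgHom_mkAlgHom_apply, hφι]
    · intro g hg
      have key : g.comp (RingQuot.mkAlgHom R (extQuadRel R V K)) = φ := by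
        apply FreeAlgebra.hom_ext
        funext v
        simp only [AlgHom.coe_comp, Function.comp_apply, FreeAlgebra.lift_ι_apply]
        have h1 := congrArg (fun g' => g' (ExteriorAlgebra.ι R
          (Pi.single (⟨v, Finset.mem_singleton_self v⟩ :
            { w // w ∈ ({v} : Finset V) }) 1))) (hg {v} (hsingle v))
        simp only [AlgHom.coe_comp, Function.comp_apply] at h1
        rw [ExteriorAlgebra.lift_ι_apply, jLin_single] at h1
        show g (RingQuot.mkAlgHom R _ (ι R v)) = _
        rw [show RingQuot.mkAlgHom R (extQuadRel R V K) (ι R v) = uGen R V K v from rfl, h1, hφι, hb]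
      rw [RingQuot.liftAlgHom_unique R φ hw g key]
end

section
/- Let m ≥ 2. Let U_m = {z ∈ ℂ^m : for all i ≠ j, not both z_i = 0 and z_j = 0} be the complement in ℂ^m of the union of all codimension-two coordinate subspaces {z : z_i = z_j = 0}, and let Z_m = ⋃_{i=1}^m {z ∈ ℂ^m : |z_i| ≤ 1 and |z_j| = 1 for all j ≠ i}, both with the subspace topology from ℂ^m. Then U_m and Z_m are homotopy equivalent. (Z_m is the moment-angle complex Z_K of the discrete simplicial complex K on m vertices.) -/
/-- The complement in `ℂ^m` of the union of all codimension-two coordinate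
subspaces `{z : z_i = z_j = 0}` for `i ≠ j`. -/
def subspaceArrangementComplement (m : ℕ) : Set (Fin m → ℂ) :=
  { z | ∀ i j : Fin m, i ≠ j → ¬(z i = 0 ∧ z j = 0) }

/-- The moment-angle complex of the discrete simplicial complex on `m`
vertices: `Z_m = ⋃_{i} {z ∈ ℂ^m : |z_i| ≤ 1 and |z_j| = 1 for all j ≠ i}`. -/
def discreteMomentAngleComplex (m : ℕ) : Set (Fin m → ℂ) :=
  { z | ∃ i : Fin m, ‖z i‖ ≤ 1 ∧
      ∀ j : Fin m, j ≠ i → ‖z j‖ = 1 }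

namespace MAC

/-- The finset of ordered pairs of distinct indices. -/
def pairs (m : ℕ) : Finset (Fin m × Fin m) :=
  Finset.univ.filter (fun p => p.1 ≠ p.2)

lemma mem_pairs {m : ℕ} {p : Fin m × Fin m} : p ∈ pairs m ↔ p.1 ≠ p.2 := by
  simp [pairs]

lemma pairs_nonempty {m : ℕ} (hm : 2 ≤ m) : (pairs m).Nonempty := by
  refine ⟨(⟨0, by omega⟩, ⟨1, by omega⟩), mem_pairs.2 ?_⟩
  simp [Fin.ext_iff]

/-- The "second smallest modulus" function: min over pairs `i ≠ j` of
`max |z i| |z j|`. -/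
noncomputable def sF (m : ℕ) (hm : 2 ≤ m) (z : Fin m → ℂ) : ℝ :=
  (pairs m).inf' (pairs_nonempty hm)
    (fun p => max (‖z p.1‖) (‖z p.2‖))

lemma sF_cont (m : ℕ) (hm : 2 ≤ m) : Continuous (sF m hm) := by
  refine Continuous.finset_inf'_apply (pairs_nonempty hm) (fun p _ => ?_)
  exact (continuous_norm.comp (continuous_apply p.1)).max
    (continuous_norm.comp (continuous_apply p.2))

lemma sF_le {m : ℕ} (hm : 2 ≤ m) (z : Fin m → ℂ) {i j : Fin m} (hij : i ≠ j) :
    sF m hm z ≤ max (‖z i‖) (‖z j‖) := by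
  unfold sF
  exact Finset.inf'_le (b := (i, j)) _ (mem_pairs.2 hij)

lemma sF_pos {m : ℕ} (hm : 2 ≤ m) {z : Fin m → ℂ}
    (hz : z ∈ subspaceArrangementComplement m) : 0 < sF m hm z := by
  rw [sF, Finset.lt_inf'_iff]
  intro p hp
  have h := hz p.1 p.2 (mem_pairs.1 hp)
  rcases Classical.em (z p.1 = 0) with h1 | h1
  · have h2 : z p.2 ≠ 0 := fun h2 => h ⟨h1, h2⟩
    exact lt_max_of_lt_right (by simpa using h2)
  · exact lt_max_of_lt_left (by simpa using h1)

/-- At most one coordinate has modulus below `sF`. -/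
lemma lt_sF_unique {m : ℕ} (hm : 2 ≤ m) {z : Fin m → ℂ} {i j : Fin m}
    (hi : ‖z i‖ < sF m hm z) (hj : ‖z j‖ < sF m hm z) :
    i = j := by
  by_contra hij
  exact absurd (sF_le hm z hij) (not_le.2 (max_lt hi hj))

lemma sF_eq_one {m : ℕ} (hm : 2 ≤ m) {z : Fin m → ℂ}
    (hz : z ∈ discreteMomentAngleComplex m) : sF m hm z = 1 := by
  obtain ⟨i, hi, hj⟩ := hz
  have key : ∀ p ∈ pairs m,
      max (‖z p.1‖) (‖z p.2‖) = 1 := by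
    intro p hp
    have hne := mem_pairs.1 hp
    rcases Classical.em (p.1 = i) with h1 | h1
    · have h2 : p.2 ≠ i := h1 ▸ hne.symm
      rw [hj p.2 h2, h1, max_eq_right hi]
    · rcases Classical.em (p.2 = i) with h2 | h2
      · rw [hj p.1 h1, h2, max_eq_left hi]
      · rw [hj p.1 h1, hj p.2 h2, max_self]
  rw [sF]
  apply le_antisymm
  · obtain ⟨p, hp⟩ := pairs_nonempty (m := m) hm
    exact le_of_le_of_eq (Finset.inf'_le _ hp) (key p hp)
  · exact Finset.le_inf' _ _ (fun p hp => (key p hp).ge)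

/-- Every coordinate of a point in `Z_m` has modulus at most 1. -/
lemma abs_le_one_of_mem {m : ℕ} {z : Fin m → ℂ}
    (hz : z ∈ discreteMomentAngleComplex m) (j : Fin m) :
    ‖z j‖ ≤ 1 := by
  obtain ⟨i, hi, hj⟩ := hz
  rcases Classical.em (j = i) with h | h
  · exact h ▸ hi
  · exact (hj j h).le

/-- The retraction map. -/
noncomputable def rF (m : ℕ) (hm : 2 ≤ m) (z : Fin m → ℂ) : Fin m → ℂ :=
  fun j => z j / ((max (‖z j‖) (sF m hm z) : ℝ) : ℂ)

lemma denom_pos {m : ℕ} (hm : 2 ≤ m) {z : Fin m → ℂ}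
    (hz : z ∈ subspaceArrangementComplement m) (j : Fin m) :
    0 < max (‖z j‖) (sF m hm z) :=
  lt_max_of_lt_right (sF_pos hm hz)

lemma abs_rF {m : ℕ} (hm : 2 ≤ m) {z : Fin m → ℂ}
    (hz : z ∈ subspaceArrangementComplement m) (j : Fin m) :
    ‖rF m hm z j‖ =
      ‖z j‖ / max (‖z j‖) (sF m hm z) := by
  rw [rF, norm_div, Complex.norm_real, Real.norm_eq_abs, abs_of_pos (denom_pos hm hz j)]

lemma rF_mem {m : ℕ} (hm : 2 ≤ m) {z : Fin m → ℂ}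
    (hz : z ∈ subspaceArrangementComplement m) :
    rF m hm z ∈ discreteMomentAngleComplex m := by
  have hs := sF_pos hm hz
  have habs1 : ∀ j : Fin m, sF m hm z ≤ ‖z j‖ →
      ‖rF m hm z j‖ = 1 := by
    intro j hjs
    rw [abs_rF hm hz j, max_eq_left hjs,
      div_self (lt_of_lt_of_le hs hjs).ne']
  rcases Classical.em (∃ j, ‖z j‖ < sF m hm z) with ⟨j₀, hj₀⟩ | h
  · refine ⟨j₀, ?_, fun j hj => ?_⟩
    · rw [abs_rF hm hz j₀, max_eq_right hj₀.le]
      exact div_le_one_of_le₀ hj₀.le hs.le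
    · refine habs1 j (not_lt.1 fun hlt => hj (lt_sF_unique hm hlt hj₀))
  · push_neg at h
    exact ⟨⟨0, by omega⟩, (habs1 _ (h _)).le, fun j _ => habs1 j (h j)⟩

/-- On `Z_m`, the retraction is the identity. -/
lemma rF_eq_of_mem {m : ℕ} (hm : 2 ≤ m) {z : Fin m → ℂ}
    (hz : z ∈ discreteMomentAngleComplex m) : rF m hm z = z := by
  funext j
  have h1 : max (‖z j‖) (sF m hm z) = 1 := by
    rw [sF_eq_one hm hz, max_eq_right (abs_le_one_of_mem hz j)]
  rw [rF, h1]
  simp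

end MAC

open MAC in
/-- For `m ≥ 2`, the complement `U_m` in `ℂ^m` of the union
of all codimension-two coordinate subspaces is homotopy equivalent to the
moment-angle complex `Z_m` of the discrete simplicial complex on `m` vertices
(both with the subspace topology from `ℂ^m`). -/
theorem complement_homotopyEquiv_momentAngle (m : ℕ) (hm : 2 ≤ m) :
    Nonempty
      (ContinuousMap.HomotopyEquiv
        (subspaceArrangementComplement m) (discreteMomentAngleComplex m)) := by
  -- Z_m ⊆ U_m
  have hsub : discreteMomentAngleComplex m ⊆ subspaceArrangementComplement m := by
    intro z hz i j hij ⟨h1, h2⟩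
    obtain ⟨k, _, hk⟩ := hz
    rcases Classical.em (i = k) with h | h
    · have := hk j (h ▸ hij.symm)
      rw [h2] at this; simp at this
    · have := hk i h
      rw [h1] at this; simp at this
  -- the retraction, as a continuous map
  have cont_r : Continuous (fun z : subspaceArrangementComplement m =>
      rF m hm (z : Fin m → ℂ)) := by
    refine continuous_pi (fun j => Continuous.div ?_ ?_ ?_)
    · exact (continuous_apply j).comp continuous_subtype_val
    · exact Complex.continuous_ofReal.comp
        (((continuous_norm.comp
          ((continuous_apply j).comp continuous_subtype_val)).max
          ((sF_cont m hm).comp continuous_subtype_val)))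
    · intro z
      exact Complex.ofReal_ne_zero.2 (denom_pos hm z.2 j).ne'
  let f : C(subspaceArrangementComplement m, discreteMomentAngleComplex m) :=
    ⟨fun z => ⟨rF m hm (z : Fin m → ℂ), rF_mem hm z.2⟩, cont_r.subtype_mk _⟩
  let g : C(discreteMomentAngleComplex m, subspaceArrangementComplement m) :=
    ⟨fun z => ⟨(z : Fin m → ℂ), hsub z.2⟩, continuous_subtype_val.subtype_mk _⟩
  -- The homotopy from the identity of U_m to g ∘ f
  have hdenom : ∀ (t : unitInterval) (z : subspaceArrangementComplement m)
      (j : Fin m), 0 < (1 - (t : ℝ)) +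
        (t : ℝ) * max (‖(z : Fin m → ℂ) j‖) (sF m hm z) := by
    intro t z j
    have ht0 := t.2.1
    have ht1 := t.2.2
    have hc := denom_pos hm z.2 j
    rcases lt_or_ge (t : ℝ) 1 with h | h
    · have h1 : 0 < 1 - (t : ℝ) := by linarith
      have h2 : 0 ≤ (t : ℝ) * max (‖(z : Fin m → ℂ) j‖) (sF m hm z) :=
        mul_nonneg ht0 hc.le
      linarith
    · have h1 : (t : ℝ) = 1 := le_antisymm ht1 h
      rw [h1]; simpa using hc
  have Hmem : ∀ (t : unitInterval) (z : subspaceArrangementComplement m),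
      (fun j => (z : Fin m → ℂ) j /
        (((1 - (t : ℝ)) + (t : ℝ) * max (‖(z : Fin m → ℂ) j‖)
          (sF m hm z) : ℝ) : ℂ)) ∈ subspaceArrangementComplement m := by
    intro t z i j hij hzero
    refine z.2 i j hij ⟨?_, ?_⟩
    · have := hzero.1
      rcases div_eq_zero_iff.1 this with h | h
      · exact h
      · exact absurd h (Complex.ofReal_ne_zero.2 (hdenom t z i).ne')
    · have := hzero.2
      rcases div_eq_zero_iff.1 this with h | h
      · exact h
      · exact absurd h (Complex.ofReal_ne_zero.2 (hdenom t z j).ne')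
  have contH : Continuous (fun p : unitInterval × subspaceArrangementComplement m =>
      (fun j => ((p.2 : Fin m → ℂ) j) /
        (((1 - (p.1 : ℝ)) + (p.1 : ℝ) *
          max (‖(p.2 : Fin m → ℂ) j‖) (sF m hm p.2) : ℝ) : ℂ))) := by
    refine continuous_pi (fun j => Continuous.div ?_ ?_ ?_)
    · exact (continuous_apply j).comp (continuous_subtype_val.comp continuous_snd)
    · refine Complex.continuous_ofReal.comp ?_
      refine ((continuous_const.sub
        (continuous_subtype_val.comp continuous_fst)).add ?_)
      refine (continuous_subtype_val.comp continuous_fst).mul ?_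
      exact (continuous_norm.comp ((continuous_apply j).comp
        (continuous_subtype_val.comp continuous_snd))).max
        ((sF_cont m hm).comp (continuous_subtype_val.comp continuous_snd))
    · intro p
      exact Complex.ofReal_ne_zero.2 (hdenom p.1 p.2 j).ne'
  let H : ContinuousMap.Homotopy
      (ContinuousMap.id (subspaceArrangementComplement m)) (g.comp f) :=
    { toFun := fun p => ⟨fun j => ((p.2 : Fin m → ℂ) j) /
        (((1 - (p.1 : ℝ)) + (p.1 : ℝ) *
          max (‖(p.2 : Fin m → ℂ) j‖) (sF m hm p.2) : ℝ) : ℂ),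
        Hmem p.1 p.2⟩
      continuous_toFun := contH.subtype_mk _
      map_zero_left := by
        intro z
        apply Subtype.ext
        funext j
        simp
      map_one_left := by
        intro z
        apply Subtype.ext
        funext j
        show (z : Fin m → ℂ) j / _ = rF m hm (z : Fin m → ℂ) j
        rw [rF]
        norm_num }
  -- f ∘ g is the identity of Z_m
  have hfg : f.comp g = ContinuousMap.id (discreteMomentAngleComplex m) := by
    ext z
    exact congrFun (rF_eq_of_mem hm z.2) _
  exact ⟨{ toFun := f
           invFun := g
           left_inv := ⟨H.symm⟩
           right_inv := hfg ▸ ContinuousMap.Homotopic.refl _ }⟩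
end
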